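/- Let m ≥ 1 and n ≥ 1 be integers and let x be a real number with 0 < x < π. Define τ(k) = k/2 if k is even and τ(k) = (k-1)/2 if k is odd. Then ∑_{k=0}^{n} (-1)^{τ(k)} · C(n-k+m, m) · sin((2k+1)x) / (2k+1) > 0. -/

import Mathlib

open Real Finset

noncomputable def Pfun (n : ℕ) (y : ℝ) : ℝ :=
  ∑ k ∈ Finset.range (n+1), ((n+1-k : ℕ):ℝ) * Real.sin ((2*k+1)*y)

noncomputable def Hfun (n : ℕ) (y : ℝ) : ℝ :=
  ∑ k ∈ Finset.range (n+1), ((n+1-k : ℕ):ℝ) * Real.cos ((2*k+1)*y) / (2*k+1)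

noncomputable def Sg (x : ℝ) (m n : ℕ) : ℝ :=
  ∑ k ∈ Finset.range (n+1),
    (-1:ℝ)^(k/2) * ((n - k + m).choose m : ℝ) * Real.sin ((2*k+1)*x) / (2*k+1)

lemma fejA (N : ℕ) (y : ℝ) :
    Real.sin y * ∑ k ∈ Finset.range N, Real.sin ((2*k+1)*y) = Real.sin (N*y)^2 := by
  induction N with
  | zero => simp
  | succ N ih =>
    rw [Finset.sum_range_succ, mul_add, ih]
    have h1 : ((2*(N:ℝ)+1))*y = N*y + (N*y + y) := by ring
    have h2 : ((N:ℝ)+1)*y = N*y + y := by ring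
    push_cast
    rw [h1, h2, Real.sin_add, Real.sin_add (N*y) y, Real.cos_add (N*y) y]
    nlinarith [Real.sin_sq_add_cos_sq y, Real.sin_sq_add_cos_sq ((N:ℝ)*y)]

lemma swapW (f : ℕ → ℝ) (n : ℕ) :
    ∑ j ∈ Finset.range (n+1), ∑ k ∈ Finset.range (j+1), f k
      = ∑ k ∈ Finset.range (n+1), ((n+1-k : ℕ):ℝ) * f k := by
  induction n with
  | zero => simp
  | succ n ih =>
    rw [Finset.sum_range_succ, ih]
    have h1 : ∑ k ∈ Finset.range (n+2), ((n+2-k : ℕ):ℝ) * f k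
        = ∑ k ∈ Finset.range (n+2), (((n+1-k : ℕ):ℝ) * f k + f k) := by
      apply Finset.sum_congr rfl
      intro k hk
      simp only [Finset.mem_range] at hk
      have : (n+2-k : ℕ) = (n+1-k) + 1 := by omega
      rw [this]
      push_cast
      ring
    have h2 : ∑ k ∈ Finset.range (n+2), ((n+1-k : ℕ):ℝ) * f k
        = ∑ k ∈ Finset.range (n+1), ((n+1-k : ℕ):ℝ) * f k := by
      rw [Finset.sum_range_succ]; simp
    rw [h1, Finset.sum_add_distrib, h2]

lemma Pfun_id (n : ℕ) (y : ℝ) :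
    Real.sin y * Pfun n y = ∑ j ∈ Finset.range (n+1), Real.sin ((j+1)*y)^2 := by
  rw [Pfun, ← swapW, Finset.mul_sum]
  apply Finset.sum_congr rfl
  intro j _
  rw [fejA (j+1) y]
  push_cast
  ring_nf

lemma Pfun_pos (n : ℕ) (y : ℝ) (h0 : 0 < y) (h1 : y < π) : 0 < Pfun n y := by
  have hs : 0 < Real.sin y := Real.sin_pos_of_pos_of_lt_pi h0 h1
  have hge : Real.sin y ^ 2 ≤ ∑ j ∈ Finset.range (n+1), Real.sin ((j+1)*y)^2 := by
    have h0' : (0:ℕ) ∈ Finset.range (n+1) := by simp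
    have := Finset.single_le_sum (f := fun j : ℕ => Real.sin ((j+1)*y)^2)
        (fun i _ => sq_nonneg _) h0'
    simpa using this
  have := Pfun_id n y
  nlinarith

lemma Hfun_deriv (n : ℕ) (y : ℝ) : HasDerivAt (Hfun n) (-(Pfun n y)) y := by
  have key : ∀ k ∈ Finset.range (n+1), HasDerivAt
      (fun t => ((n+1-k : ℕ):ℝ) * Real.cos ((2*k+1)*t) / (2*(k:ℝ)+1))
      (-(((n+1-k : ℕ):ℝ) * Real.sin ((2*k+1)*y))) y := by
    intro k _
    have h2 : (2*(k:ℝ)+1) ≠ 0 := by positivity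
    have hc : HasDerivAt (fun t : ℝ => Real.cos ((2*k+1)*t))
        (-Real.sin ((2*k+1)*y) * (2*(k:ℝ)+1)) y := by
      have := (Real.hasDerivAt_cos ((2*(k:ℝ)+1)*y)).comp y
        ((hasDerivAt_id y).const_mul (2*(k:ℝ)+1))
      refine this.congr_deriv ?_
      simp
    have := (hc.const_mul (((n+1-k : ℕ):ℝ))).div_const (2*(k:ℝ)+1)
    refine this.congr_deriv (Eq.symm ?_)
    field_simp
  have h := HasDerivAt.fun_sum key
  have e1 : (fun t => ∑ k ∈ Finset.range (n+1),
      ((n+1-k : ℕ):ℝ) * Real.cos ((2*k+1)*t) / (2*(k:ℝ)+1)) = Hfun n := rfl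
  rw [e1] at h
  refine h.congr_deriv (Eq.symm ?_)
  rw [Pfun, neg_eq_iff_eq_neg, ← Finset.sum_neg_distrib]
  simp

lemma Hfun_anti (n : ℕ) : StrictAntiOn (Hfun n) (Set.Icc 0 π) := by
  apply strictAntiOn_of_deriv_neg (convex_Icc 0 π)
  · exact Continuous.continuousOn (continuous_iff_continuousAt.2
      (fun y => (Hfun_deriv n y).differentiableAt.continuousAt))
  · intro y hy
    rw [interior_Icc] at hy
    rw [(Hfun_deriv n y).deriv]
    have := Pfun_pos n y hy.1 hy.2
    linarith

lemma Hfun_even (n : ℕ) (y : ℝ) : Hfun n (-y) = Hfun n y := by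
  unfold Hfun
  apply Finset.sum_congr rfl
  intro k _
  rw [mul_neg, Real.cos_neg]

lemma cos_odd_pi_sub (k : ℕ) (t : ℝ) :
    Real.cos ((2*(k:ℝ)+1)*(π - t)) = -Real.cos ((2*(k:ℝ)+1)*t) := by
  have h : (2*(k:ℝ)+1)*(π - t) = (π - (2*(k:ℝ)+1)*t) + (k:ℤ)*(2*π) := by
    push_cast; ring
  rw [h, Real.cos_add_int_mul_two_pi, Real.cos_pi_sub]

lemma Hfun_pi_sub (n : ℕ) (y : ℝ) : Hfun n (π - y) = -Hfun n y := by
  unfold Hfun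
  rw [← Finset.sum_neg_distrib]
  apply Finset.sum_congr rfl
  intro k _
  rw [cos_odd_pi_sub]
  ring

lemma sqrt2_half : Real.sqrt 2 * (Real.sqrt 2 / 2) = 1 := by
  rw [← mul_div_assoc, Real.mul_self_sqrt (by norm_num : (0:ℝ) ≤ 2)]
  norm_num

lemma sign_id : ∀ k : ℕ, Real.sqrt 2 * Real.sin ((2*(k:ℝ)+1)*(π/4)) = (-1:ℝ)^(k/2)
  | 0 => by
      have h : (2*((0:ℕ):ℝ)+1)*(π/4) = π/4 := by push_cast; ring
      rw [h, Real.sin_pi_div_four, sqrt2_half]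
      norm_num
  | 1 => by
      have h : (2*((1:ℕ):ℝ)+1)*(π/4) = π - π/4 := by push_cast; ring
      rw [h, Real.sin_pi_sub, Real.sin_pi_div_four, sqrt2_half]
      norm_num
  | 2 => by
      have h : (2*((2:ℕ):ℝ)+1)*(π/4) = π/4 + π := by push_cast; ring
      rw [h, Real.sin_add_pi, Real.sin_pi_div_four, mul_neg, sqrt2_half]
      norm_num
  | 3 => by
      have h : (2*((3:ℕ):ℝ)+1)*(π/4) = (π - π/4) + π := by push_cast; ring
      rw [h, Real.sin_add_pi, Real.sin_pi_sub, Real.sin_pi_div_four, mul_neg, sqrt2_half]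
      norm_num
  | (k+4) => by
      have h : (2*((k+4:ℕ):ℝ)+1)*(π/4) = (2*(k:ℝ)+1)*(π/4) + 2*π := by push_cast; ring
      have h2 : (k+4)/2 = k/2 + 2 := by omega
      rw [h, Real.sin_add_two_pi, sign_id k, h2, pow_add]
      norm_num

lemma term_id (k : ℕ) (x : ℝ) :
    (-1:ℝ)^(k/2) * Real.sin ((2*(k:ℝ)+1)*x)
      = (Real.sqrt 2 / 2) *
        (Real.cos ((2*(k:ℝ)+1)*(x - π/4)) - Real.cos ((2*(k:ℝ)+1)*(x + π/4))) := by
  rw [← sign_id k, Real.cos_sub_cos]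
  have e1 : ((2*(k:ℝ)+1)*(x - π/4) + (2*(k:ℝ)+1)*(x + π/4))/2 = (2*(k:ℝ)+1)*x := by ring
  have e2 : ((2*(k:ℝ)+1)*(x - π/4) - (2*(k:ℝ)+1)*(x + π/4))/2 = -((2*(k:ℝ)+1)*(π/4)) := by
    ring
  rw [e1, e2, Real.sin_neg]
  ring

lemma S1_eq (x : ℝ) (n : ℕ) :
    Sg x 1 n = (Real.sqrt 2 / 2) * (Hfun n (x - π/4) - Hfun n (x + π/4)) := by
  unfold Sg Hfun
  rw [← Finset.sum_sub_distrib, Finset.mul_sum]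
  apply Finset.sum_congr rfl
  intro k hk
  simp only [Finset.mem_range] at hk
  have hc : (n - k + 1).choose 1 = n + 1 - k := by
    rw [Nat.choose_one_right]; omega
  rw [hc]
  have h := term_id k x
  calc (-1:ℝ)^(k/2) * ((n+1-k : ℕ):ℝ) * Real.sin ((2*(k:ℝ)+1)*x) / (2*(k:ℝ)+1)
      = ((n+1-k : ℕ):ℝ)/(2*(k:ℝ)+1) * ((-1:ℝ)^(k/2) * Real.sin ((2*(k:ℝ)+1)*x)) := by
        ring
    _ = ((n+1-k : ℕ):ℝ)/(2*(k:ℝ)+1) * ((Real.sqrt 2 / 2) *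
          (Real.cos ((2*(k:ℝ)+1)*(x - π/4)) - Real.cos ((2*(k:ℝ)+1)*(x + π/4)))) := by
        rw [h]
    _ = _ := by ring

lemma hockey (x : ℝ) (m n : ℕ) :
    Sg x (m+1) n = ∑ j ∈ Finset.range (n+1), Sg x m j := by
  induction n with
  | zero => simp [Sg]
  | succ n ih =>
    rw [Finset.sum_range_succ, ← ih]
    unfold Sg
    rw [Finset.sum_range_succ, Finset.sum_range_succ
      (fun k => (-1:ℝ)^(k/2) * (((n+1) - k + m).choose m : ℝ)
        * Real.sin ((2*k+1)*x) / (2*k+1))]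
    have key : ∑ k ∈ Finset.range (n+1),
        (-1:ℝ)^(k/2) * (((n+1) - k + (m+1)).choose (m+1) : ℝ)
          * Real.sin ((2*k+1)*x) / (2*k+1)
        = ∑ k ∈ Finset.range (n+1),
          ((-1:ℝ)^(k/2) * ((n - k + (m+1)).choose (m+1) : ℝ)
            * Real.sin ((2*k+1)*x) / (2*k+1)
          + (-1:ℝ)^(k/2) * (((n+1) - k + m).choose m : ℝ)
            * Real.sin ((2*k+1)*x) / (2*k+1)) := by
      apply Finset.sum_congr rfl
      intro k hk
      simp only [Finset.mem_range] at hk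
      have e1 : (n+1) - k + (m+1) = (n - k + (m+1)) + 1 := by omega
      have e2 : (n+1) - k + m = n - k + (m+1) := by omega
      rw [e1, e2, Nat.choose_succ_succ]
      push_cast
      ring
    rw [key, Finset.sum_add_distrib]
    have e3 : (n+1) - (n+1) + m = m := by omega
    rw [e3]
    simp [Nat.choose_self]
    ring

lemma S1_pos (x : ℝ) (hx : 0 < x) (hx' : x < π) (n : ℕ) : 0 < Sg x 1 n := by
  have hpi := Real.pi_pos
  have hanti := Hfun_anti n
  have key : Hfun n (x + π/4) < Hfun n (x - π/4) := by
    rcases le_or_gt (x + π/4) π with hb | hb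
    · have habs : Hfun n (x - π/4) = Hfun n |x - π/4| := by
        rcases le_or_gt 0 (x - π/4) with h | h
        · rw [abs_of_nonneg h]
        · rw [abs_of_neg h, Hfun_even]
      rw [habs]
      apply hanti
      · constructor
        · exact abs_nonneg _
        · rw [abs_le]; constructor <;> linarith
      · constructor <;> linarith
      · rw [abs_lt]; constructor <;> linarith
    · -- x > 3π/4 case
      have hu : Hfun n (x + π/4) = - Hfun n (x - 3*π/4) := by
        have e : x + π/4 = π - ( -(x - 3*π/4)) := by ring
        rw [e, Hfun_pi_sub, Hfun_even]
      have hv : Hfun n (x - π/4) = - Hfun n (5*π/4 - x) := by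
        have e : x - π/4 = π - (5*π/4 - x) := by ring
        rw [e, Hfun_pi_sub]
      rw [hu, hv, neg_lt_neg_iff]
      apply hanti
      · constructor <;> linarith
      · constructor <;> linarith
      · linarith
  rw [S1_eq]
  have hs2 : 0 < Real.sqrt 2 := Real.sqrt_pos.2 (by norm_num)
  have : 0 < Hfun n (x - π/4) - Hfun n (x + π/4) := by linarith
  positivity

lemma Sg_pos (x : ℝ) (hx : 0 < x) (hx' : x < π) :
    ∀ m, 1 ≤ m → ∀ n, 0 < Sg x m n := by
  intro m
  induction m with
  | zero => omega
  | succ m ih =>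
    intro _ n
    rcases Nat.eq_zero_or_pos m with hm0 | hm1
    · subst hm0
      exact S1_pos x hx hx' n
    · rw [hockey]
      apply Finset.sum_pos
      · intro j _
        exact ih hm1 j
      · exact ⟨0, by simp⟩

theorem stmt_8 (m n : ℕ) (hm : 1 ≤ m) (hn : 1 ≤ n) (x : ℝ) (hx : 0 < x) (hx' : x < π)
    (τ : ℕ → ℕ) (hτ : ∀ k, (Even k → τ k = k / 2) ∧ (Odd k → τ k = (k - 1) / 2)) :
    0 < ∑ k ∈ Finset.range (n + 1),
        (-1 : ℝ) ^ (τ k) * ((n - k + m).choose m : ℝ) * Real.sin ((2 * k + 1) * x)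
          / (2 * k + 1) := by
  have hτ' : ∀ k, τ k = k / 2 := by
    intro k
    rcases Nat.even_or_odd k with h | h
    · exact (hτ k).1 h
    · rw [(hτ k).2 h]
      obtain ⟨j, hj⟩ := h
      omega
  have heq : ∑ k ∈ Finset.range (n + 1),
        (-1 : ℝ) ^ (τ k) * ((n - k + m).choose m : ℝ) * Real.sin ((2 * k + 1) * x)
          / (2 * k + 1) = Sg x m n := by
    unfold Sg
    apply Finset.sum_congr rfl
    intro k _
    rw [hτ']
  rw [heq]
  exact Sg_pos x hx hx' m hm n
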